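/- The function g(τ) = (1 − cos(τ))/(τ − sin(τ)) extends continuously to a strictly decreasing bijection from (0, 2π) onto (0, ∞), tending to +∞ as τ → 0⁺ and to 0 as τ → 2π⁻. In particular, for every c > 0 there is a unique τ ∈ (0, 2π) with (1 − cos(τ))/(τ − sin(τ)) = c. -/

import Mathlib

open Real Filter

private lemma denom_pos {τ : ℝ} (h : 0 < τ) : 0 < τ - Real.sin τ :=
  sub_pos.2 (Real.sin_lt h)

private lemma key1 {u : ℝ} (hu : u ∈ Set.Ioo 0 Real.pi) : u * Real.cos u < Real.sin u := by
  have hmono : StrictMonoOn (fun u : ℝ => Real.sin u - u * Real.cos u) (Set.Icc 0 Real.pi) := by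
    apply strictMonoOn_of_deriv_pos (convex_Icc _ _)
    · fun_prop
    · intro x hx
      rw [interior_Icc] at hx
      have hd : HasDerivAt (fun u : ℝ => Real.sin u - u * Real.cos u)
          (Real.cos x - (1 * Real.cos x + x * (-Real.sin x))) x :=
        (Real.hasDerivAt_sin x).sub ((hasDerivAt_id x).mul (Real.hasDerivAt_cos x))
      rw [hd.deriv]
      have := Real.sin_pos_of_pos_of_lt_pi hx.1 hx.2
      nlinarith [mul_pos hx.1 this]
  have h0 : (0:ℝ) ∈ Set.Icc 0 Real.pi := ⟨le_refl _, Real.pi_pos.le⟩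
  have hu' : u ∈ Set.Icc 0 Real.pi := ⟨hu.1.le, hu.2.le⟩
  have := hmono h0 hu' hu.1
  simp at this
  linarith

private lemma key2 {τ : ℝ} (hτ : τ ∈ Set.Ioo 0 (2 * Real.pi)) :
    τ * Real.sin τ - 2 + 2 * Real.cos τ < 0 := by
  have hu : τ / 2 ∈ Set.Ioo 0 Real.pi := ⟨by linarith [hτ.1], by linarith [hτ.2]⟩
  have h1 := key1 hu
  have hs := Real.sin_pos_of_pos_of_lt_pi hu.1 hu.2
  have hcos : Real.cos τ = 2 * Real.cos (τ/2) ^ 2 - 1 := by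
    rw [← Real.cos_two_mul]; ring_nf
  have hsin : Real.sin τ = 2 * Real.sin (τ/2) * Real.cos (τ/2) := by
    rw [← Real.sin_two_mul]; ring_nf
  have hpyth := Real.sin_sq_add_cos_sq (τ/2)
  have heq : τ * Real.sin τ - 2 + 2 * Real.cos τ =
      2 * τ * Real.sin (τ/2) * Real.cos (τ/2) - 4 * Real.sin (τ/2) ^ 2 := by
    rw [hsin, hcos]; linear_combination (4:ℝ) * hpyth
  rw [heq]
  nlinarith [mul_pos hs (sub_pos.2 h1)]

private lemma gderiv {τ : ℝ} (hτ : τ ∈ Set.Ioo 0 (2 * Real.pi)) :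
    deriv (fun τ : ℝ => (1 - Real.cos τ) / (τ - Real.sin τ)) τ < 0 := by
  have hD := denom_pos hτ.1
  have hd : HasDerivAt (fun τ : ℝ => (1 - Real.cos τ) / (τ - Real.sin τ))
      ((-(-Real.sin τ) * (τ - Real.sin τ) - (1 - Real.cos τ) * (1 - Real.cos τ)) /
        (τ - Real.sin τ) ^ 2) τ := by
    exact HasDerivAt.div ((Real.hasDerivAt_cos τ).const_sub 1)
      ((hasDerivAt_id τ).sub (Real.hasDerivAt_sin τ)) hD.ne'
  rw [hd.deriv]
  apply div_neg_of_neg_of_pos _ (by positivity)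
  have h2 := key2 hτ
  have hpyth := Real.sin_sq_add_cos_sq τ
  nlinarith

private lemma gcont : ContinuousOn (fun τ : ℝ => (1 - Real.cos τ) / (τ - Real.sin τ))
    (Set.Ioo 0 (2 * Real.pi)) := by
  apply ContinuousOn.div (by fun_prop) (by fun_prop)
  intro x hx; exact (denom_pos hx.1).ne'

private lemma ganti : StrictAntiOn (fun τ : ℝ => (1 - Real.cos τ) / (τ - Real.sin τ))
    (Set.Ioo 0 (2 * Real.pi)) := by
  apply strictAntiOn_of_deriv_neg (convex_Ioo _ _) gcont
  rw [interior_Ioo]; exact fun x hx => gderiv hx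

private lemma glb {τ : ℝ} (h0 : 0 < τ) (h1 : τ ≤ 1) :
    1 / τ ≤ (1 - Real.cos τ) / (τ - Real.sin τ) := by
  have hD := denom_pos h0
  have hDle : τ - Real.sin τ ≤ τ ^ 3 / 4 := by
    have := Real.sin_gt_sub_cube h0
    have : (0:ℝ) ≤ τ ^ 3 := by positivity
    linarith
  have hNge : τ ^ 2 / 4 ≤ 1 - Real.cos τ := by
    have hu0 : 0 < τ / 2 := by linarith
    have hu1 : τ / 2 ≤ 1 := by linarith
    have hs : τ/2 - (τ/2)^3/4 < Real.sin (τ/2) := by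
      have := Real.sin_gt_sub_cube hu0
      have : (0:ℝ) ≤ (τ/2) ^ 3 := by positivity
      linarith
    have hcos : Real.cos τ = 1 - 2 * Real.sin (τ/2) ^ 2 := by
      have h := Real.cos_two_mul (τ/2)
      have hpyth := Real.sin_sq_add_cos_sq (τ/2)
      rw [show 2 * (τ/2) = τ by ring] at h
      linarith
    have hsnn : (0:ℝ) ≤ τ/2 - (τ/2)^3/4 := by
      have hcube : (0:ℝ) ≤ (τ/2) * (1 - τ/2) * (1 + τ/2) :=
        mul_nonneg (mul_nonneg hu0.le (by linarith)) (by linarith)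
      have hc3 : (0:ℝ) ≤ (τ/2)^3 := by positivity
      nlinarith
    nlinarith [sq_nonneg (Real.sin (τ/2) - (τ/2 - (τ/2)^3/4))]
  calc 1 / τ = (τ^2/4) / (τ^3/4) := by field_simp
    _ ≤ (1 - Real.cos τ) / (τ - Real.sin τ) := by
        apply div_le_div₀ (by linarith [Real.cos_le_one τ]) hNge hD hDle

private lemma gtop : Tendsto (fun τ : ℝ => (1 - Real.cos τ) / (τ - Real.sin τ))
    (nhdsWithin 0 (Set.Ioi 0)) atTop := by
  apply tendsto_atTop_mono' _ _ tendsto_inv_nhdsGT_zero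
  have hmem : Set.Ioc (0:ℝ) 1 ∈ nhdsWithin (0:ℝ) (Set.Ioi 0) :=
    Ioc_mem_nhdsGT_of_mem ⟨le_refl _, one_pos⟩
  filter_upwards [hmem] with τ hτ
  simpa [one_div] using glb hτ.1 hτ.2

private lemma gbot : Tendsto (fun τ : ℝ => (1 - Real.cos τ) / (τ - Real.sin τ))
    (nhdsWithin (2 * Real.pi) (Set.Iio (2 * Real.pi))) (nhds 0) := by
  have hD : (2 * Real.pi - Real.sin (2 * Real.pi)) ≠ 0 := (denom_pos (by positivity)).ne'
  have hc : ContinuousAt (fun τ : ℝ => (1 - Real.cos τ) / (τ - Real.sin τ)) (2 * Real.pi) := by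
    exact (continuousAt_const.sub Real.continuous_cos.continuousAt).div
      (continuousAt_id.sub Real.continuous_sin.continuousAt) hD
  have := hc.tendsto.mono_left (nhdsWithin_le_nhds (s := Set.Iio (2 * Real.pi)))
  simpa [Real.cos_two_pi] using this

theorem stmt3 :
    StrictAntiOn (fun τ : ℝ => (1 - Real.cos τ) / (τ - Real.sin τ)) (Set.Ioo 0 (2 * Real.pi)) ∧
    Tendsto (fun τ : ℝ => (1 - Real.cos τ) / (τ - Real.sin τ))
      (nhdsWithin 0 (Set.Ioi 0)) atTop ∧
    Tendsto (fun τ : ℝ => (1 - Real.cos τ) / (τ - Real.sin τ))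
      (nhdsWithin (2 * Real.pi) (Set.Iio (2 * Real.pi))) (nhds 0) ∧
    (∀ c : ℝ, 0 < c → ∃! τ : ℝ, τ ∈ Set.Ioo 0 (2 * Real.pi) ∧
      (1 - Real.cos τ) / (τ - Real.sin τ) = c) := by
  refine ⟨ganti, gtop, gbot, ?_⟩
  intro c hc
  set g := fun τ : ℝ => (1 - Real.cos τ) / (τ - Real.sin τ)
  have hpi : 0 < 2 * Real.pi := by positivity
  -- find a with g a > c
  have ha : ∃ a, a ∈ Set.Ioo 0 (2 * Real.pi) ∧ c < g a := by
    have h1 : ∀ᶠ τ in nhdsWithin 0 (Set.Ioi 0), c < g τ := gtop.eventually_gt_atTop c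
    have h2 : Set.Ioo (0:ℝ) (2 * Real.pi) ∈ nhdsWithin (0:ℝ) (Set.Ioi 0) :=
      Ioo_mem_nhdsGT_of_mem ⟨le_refl _, hpi⟩
    obtain ⟨a, h, h'⟩ := (h1.and (eventually_of_mem h2 (fun x hx => hx))).exists
    exact ⟨a, h', h⟩
  have hb : ∃ b, b ∈ Set.Ioo 0 (2 * Real.pi) ∧ g b < c := by
    have h1 : ∀ᶠ τ in nhdsWithin (2*Real.pi) (Set.Iio (2*Real.pi)), g τ < c :=
      gbot.eventually (tendsto_id.eventually_lt_const hc) |>.mono (fun x h => h)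
    have h2 : Set.Ioo (0:ℝ) (2 * Real.pi) ∈ nhdsWithin (2*Real.pi) (Set.Iio (2*Real.pi)) :=
      Ioo_mem_nhdsLT_of_mem ⟨hpi, le_refl _⟩
    obtain ⟨b, h, h'⟩ := (h1.and (eventually_of_mem h2 (fun x hx => hx))).exists
    exact ⟨b, h', h⟩
  obtain ⟨a, ha1, ha2⟩ := ha
  obtain ⟨b, hb1, hb2⟩ := hb
  have hab : a < b := by
    by_contra h
    push_neg at h
    rcases eq_or_lt_of_le h with h | h
    · rw [h] at hb2; linarith
    · have := ganti hb1 ha1 h; simp only [g] at *; linarith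
  have hsub : Set.Icc a b ⊆ Set.Ioo 0 (2 * Real.pi) := fun x hx =>
    ⟨lt_of_lt_of_le ha1.1 hx.1, lt_of_le_of_lt hx.2 hb1.2⟩
  have hivt := intermediate_value_Icc' hab.le (gcont.mono hsub)
  obtain ⟨τ, hτmem, hτeq⟩ := hivt ⟨hb2.le, ha2.le⟩
  refine ⟨τ, ⟨hsub hτmem, hτeq⟩, ?_⟩
  intro y hy
  by_contra hne
  rcases lt_or_gt_of_ne hne with h | h
  · have := ganti hy.1 (hsub hτmem) h
    simp only [g] at *
    rw [hy.2, hτeq] at this; exact lt_irrefl _ this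
  · have := ganti (hsub hτmem) hy.1 h
    simp only [g] at *
    rw [hy.2, hτeq] at this; exact lt_irrefl _ this
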